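/- Let n ≥ 1 be an integer, ω ∈ [0,1], and set N = 2^n. For each x : Fin n → Bool define the real vector Ψ_x : (Fin n → Bool) → ℝ by Ψ_x(v) = √(1−ω) if v is the all-zero string, and Ψ_x(v) = (−1)^{Σᵢ xᵢ·vᵢ} · √(ω/(N−1)) otherwise; define φ_b : (Fin n → Bool) → ℝ by φ_b(v) = (−1)^{Σᵢ bᵢ·vᵢ} / √N. Then: (i) every Ψ_x is a unit vector; (ii) Ψ_x evaluated at the all-zero string squares to 1−ω (so the vacuum component equals 1−ω and the energy constraint Tr[HΨ_xΨ_x*] = ω is saturated); (iii) each φ_b factorizes as the n-fold product φ_b(v) = Πᵢ ((−1)^{bᵢ·vᵢ}/√2), i.e. it is a product (separable) vector across the n parties; and (iv) the average success probability (1/N) Σ_x ⟨φ_x, Ψ_x⟩² equals 2^{−n}·(√((2^n−1)·ω) + √(1−ω))². In particular, entangled preparations with local projective measurements onto |±⟩ achieve the maximal energy-restricted state-discrimination probability pEnt(ω,n). -/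

import Mathlib

open Finset

/-- The entangled preparation `Ψ_x`: amplitude `√(1−ω)` on the vacuum (all-zero string),
and `(−1)^{x·v} √(ω/(2^n−1))` on every other string `v`. -/
noncomputable def distPsi (n : ℕ) (ω : ℝ) (x : Fin n → Bool) : (Fin n → Bool) → ℝ :=
  fun v =>
    if v = (fun _ => false) then Real.sqrt (1 - ω)
    else (-1 : ℝ) ^ (∑ i, if x i ∧ v i then 1 else 0 : ℕ) * Real.sqrt (ω / ((2 : ℝ) ^ n - 1))

/-- The measurement vector `φ_b(v) = (−1)^{b·v} / √(2^n)`. -/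
noncomputable def distPhi (n : ℕ) (b : Fin n → Bool) : (Fin n → Bool) → ℝ :=
  fun v => (-1 : ℝ) ^ (∑ i, if b i ∧ v i then 1 else 0 : ℕ) / Real.sqrt ((2 : ℝ) ^ n)

theorem entangled_strategy_attains_pEnt (n : ℕ) (hn : 1 ≤ n) (ω : ℝ)
    (hω : ω ∈ Set.Icc (0 : ℝ) 1) :
    -- (i) every Ψ_x is a unit vector
    (∀ x : Fin n → Bool, ∑ v : Fin n → Bool, (distPsi n ω x v) ^ 2 = 1) ∧
    -- (ii) the vacuum component of every Ψ_x equals 1 − ω (energy constraint saturated)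
    (∀ x : Fin n → Bool, (distPsi n ω x (fun _ => false)) ^ 2 = 1 - ω) ∧
    -- (iii) each φ_b is a product (separable) vector across the n parties
    (∀ b v : Fin n → Bool,
      distPhi n b v =
        ∏ i : Fin n, ((-1 : ℝ) ^ (if b i ∧ v i then 1 else 0 : ℕ) / Real.sqrt 2)) ∧
    -- (iv) the average success probability equals pEnt(ω,n)
    ((1 / (2 : ℝ) ^ n) * ∑ x : Fin n → Bool,
        (∑ v : Fin n → Bool, distPhi n x v * distPsi n ω x v) ^ 2 =
      (1 / (2 : ℝ) ^ n) *
        (Real.sqrt (((2 : ℝ) ^ n - 1) * ω) + Real.sqrt (1 - ω)) ^ 2) := by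
  obtain ⟨hω0, hω1⟩ := hω
  have h1ω : (0:ℝ) ≤ 1 - ω := by linarith
  set v0 : Fin n → Bool := fun _ => false with hv0
  have hN2 : (2:ℝ) ≤ 2 ^ n := by
    calc (2:ℝ) = 2 ^ 1 := (pow_one 2).symm
    _ ≤ 2 ^ n := pow_le_pow_right₀ (by norm_num) hn
  have hNpos : (0:ℝ) < 2 ^ n - 1 := by linarith
  have hNnn : (0:ℝ) ≤ 2 ^ n - 1 := hNpos.le
  have hNsqpos : (0:ℝ) < Real.sqrt (2 ^ n) := Real.sqrt_pos.mpr (by positivity)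
  have hdivnn : (0:ℝ) ≤ ω / (2 ^ n - 1) := by positivity
  have hcard : ((Finset.univ.erase v0).card : ℝ) = 2 ^ n - 1 := by
    rw [Finset.card_erase_of_mem (Finset.mem_univ _), Finset.card_univ]
    have : Fintype.card (Fin n → Bool) = 2 ^ n := by
      simp [Fintype.card_fun]
    rw [this, Nat.cast_sub (Nat.one_le_two_pow)]
    push_cast; ring
  have hsq : ∀ k : ℕ, ((-1:ℝ) ^ k) * ((-1:ℝ) ^ k) = 1 := by
    intro k; rw [← pow_add]; exact Even.neg_one_pow ⟨k, rfl⟩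
  -- (ii)
  have part2 : ∀ x : Fin n → Bool, (distPsi n ω x v0) ^ 2 = 1 - ω := by
    intro x
    simp [distPsi, hv0, Real.sq_sqrt h1ω]
  -- (i)
  have part1 : ∀ x : Fin n → Bool, ∑ v : Fin n → Bool, (distPsi n ω x v) ^ 2 = 1 := by
    intro x
    rw [← Finset.add_sum_erase _ _ (Finset.mem_univ v0)]
    have herase : ∀ v ∈ Finset.univ.erase v0, (distPsi n ω x v) ^ 2 = ω / (2 ^ n - 1) := by
      intro v hv
      have hvne : v ≠ v0 := Finset.ne_of_mem_erase hv
      simp only [distPsi, if_neg (show ¬ v = fun _ => false from hvne)]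
      rw [mul_pow, sq, hsq, one_mul, Real.sq_sqrt hdivnn]
    rw [Finset.sum_congr rfl herase, Finset.sum_const, nsmul_eq_mul, hcard, part2 x]
    field_simp
    ring
  -- (iii)
  have part3 : ∀ b v : Fin n → Bool,
      distPhi n b v =
        ∏ i : Fin n, ((-1 : ℝ) ^ (if b i ∧ v i then 1 else 0 : ℕ) / Real.sqrt 2) := by
    intro b v
    rw [Finset.prod_div_distrib, Finset.prod_pow_eq_pow_sum]
    simp only [Finset.prod_const, Finset.card_univ, Fintype.card_fin]
    have h2 : Real.sqrt ((2:ℝ) ^ n) = Real.sqrt 2 ^ n := by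
      rw [Real.sqrt_eq_iff_eq_sq (by positivity) (by positivity), ← pow_mul, mul_comm n 2,
        pow_mul, Real.sq_sqrt (by norm_num : (0:ℝ) ≤ 2)]
    rw [distPhi, h2]
  refine ⟨part1, part2, part3, ?_⟩
  -- (iv)
  have key : ∀ x : Fin n → Bool,
      ∑ v : Fin n → Bool, distPhi n x v * distPsi n ω x v =
        (Real.sqrt ((2 ^ n - 1) * ω) + Real.sqrt (1 - ω)) / Real.sqrt (2 ^ n) := by
    intro x
    rw [← Finset.add_sum_erase _ _ (Finset.mem_univ v0)]
    have h0 : distPhi n x v0 * distPsi n ω x v0 = Real.sqrt (1 - ω) / Real.sqrt (2 ^ n) := by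
      simp only [distPhi, distPsi]
      simp [hv0, div_mul_eq_mul_div]
      ring
    have herase : ∀ v ∈ Finset.univ.erase v0,
        distPhi n x v * distPsi n ω x v = Real.sqrt (ω / (2 ^ n - 1)) / Real.sqrt (2 ^ n) := by
      intro v hv
      have hvne : v ≠ v0 := Finset.ne_of_mem_erase hv
      simp only [distPhi, distPsi, if_neg (show ¬ v = fun _ => false from hvne)]
      rw [div_mul_eq_mul_div, ← mul_assoc, hsq, one_mul]
    rw [Finset.sum_congr rfl herase, Finset.sum_const, nsmul_eq_mul, hcard, h0]
    have hmul : (2 ^ n - 1) * Real.sqrt (ω / (2 ^ n - 1)) = Real.sqrt ((2 ^ n - 1) * ω) := by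
      rw [Real.sqrt_div hω0, Real.sqrt_mul hNnn]
      calc (2 ^ n - 1) * (Real.sqrt ω / Real.sqrt (2 ^ n - 1))
          = (2 ^ n - 1) / Real.sqrt (2 ^ n - 1) * Real.sqrt ω := by ring
        _ = Real.sqrt (2 ^ n - 1) * Real.sqrt ω := by rw [Real.div_sqrt]
    rw [← mul_div_assoc, hmul]
    ring
  rw [Finset.sum_congr rfl (fun x _ => by rw [key x])]
  rw [Finset.sum_const, Finset.card_univ]
  have hcardu : (Fintype.card (Fin n → Bool) : ℝ) = 2 ^ n := by
    simp [Fintype.card_fun]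
  rw [nsmul_eq_mul, hcardu, div_pow, Real.sq_sqrt (by positivity : (0:ℝ) ≤ 2^n)]
  field_simp
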